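/- Pathwise comparison lemma: let f* : ℝ → ℝ be locally Lipschitz, and let ω, a, f, x, x* : [0, ∞) → ℝ be continuous functions such that for every t ≥ 0 one has x_t = x_0 + 2ω_t + ∫₀^t f_s ds and x*_t = x*_0 + 2ω_t + ∫₀^t (a_s + f*(x*_s)) ds. If x_0 ≤ x*_0 and f_t ≤ a_t + f*(x_t) for every t ≥ 0, then x_t ≤ x*_t for every t ≥ 0. Symmetrically, if x_0 ≥ x*_0 and f_t ≥ a_t + f*(x_t) for every t ≥ 0, then x_t ≥ x*_t for every t ≥ 0. -/

import Mathlib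

open MeasureTheory intervalIntegral

lemma comparison_aux
    (fstar : ℝ → ℝ) (hfstar : LocallyLipschitz fstar)
    (x xstar φ : ℝ → ℝ)
    (hx : ContinuousOn x (Set.Ici 0)) (hxstar : ContinuousOn xstar (Set.Ici 0))
    (hφ : ContinuousOn φ (Set.Ici 0))
    (heq : ∀ t : ℝ, 0 ≤ t → x t - xstar t = (x 0 - xstar 0) + ∫ s in (0:ℝ)..t, φ s)
    (hbound : ∀ t : ℝ, 0 ≤ t → φ t ≤ fstar (x t) - fstar (xstar t))
    (h0 : x 0 ≤ xstar 0) : ∀ t : ℝ, 0 ≤ t → x t ≤ xstar t := by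
  by_contra hcon
  push_neg at hcon
  obtain ⟨t1, ht1, hgt⟩ := hcon
  set d : ℝ → ℝ := fun t => x t - xstar t with hd_def
  have hd_cont : ContinuousOn d (Set.Ici 0) := hx.sub hxstar
  have hdt1 : 0 < d t1 := sub_pos.mpr hgt
  -- the set where d ≤ 0 in [0, t1]
  set S : Set ℝ := {t | t ∈ Set.Icc 0 t1 ∧ d t ≤ 0} with hS_def
  have h0S : (0 : ℝ) ∈ S := ⟨⟨le_refl 0, ht1⟩, sub_nonpos.mpr h0⟩
  have hSne : S.Nonempty := ⟨0, h0S⟩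
  have hSbdd : BddAbove S := ⟨t1, fun t ht => ht.1.2⟩
  have hSclosed : IsClosed S := by
    have h1 : ContinuousOn d (Set.Icc 0 t1) :=
      hd_cont.mono (Set.Icc_subset_Ici_self)
    have := h1.preimage_isClosed_of_isClosed (t := Set.Iic (0:ℝ)) isClosed_Icc isClosed_Iic
    convert this using 1
    rfl
  set t0 : ℝ := sSup S with ht0_def
  have ht0S : t0 ∈ S := hSclosed.csSup_mem hSne hSbdd
  have ht0mem : t0 ∈ Set.Icc 0 t1 := ht0S.1
  have ht00 : (0:ℝ) ≤ t0 := ht0mem.1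
  have hdt0le : d t0 ≤ 0 := ht0S.2
  have ht0lt : t0 < t1 := by
    rcases lt_or_eq_of_le ht0mem.2 with h | h
    · exact h
    · exfalso; rw [h] at hdt0le; linarith
  -- all t in (t0, t1] have d t > 0
  have hpos : ∀ t : ℝ, t0 < t → t ≤ t1 → 0 < d t := by
    intro t htl htr
    by_contra hle
    push_neg at hle
    have : t ∈ S := ⟨⟨le_trans ht00 htl.le, htr⟩, hle⟩
    exact absurd (le_csSup hSbdd this) (not_le.mpr htl)
  -- d t0 = 0
  have hdt0 : d t0 = 0 := by
    rcases lt_or_eq_of_le hdt0le with h | h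
    · exfalso
      have hcw : ContinuousWithinAt d (Set.Ici 0) t0 := hd_cont t0 ht00
      have hev : ∀ᶠ s in nhdsWithin t0 (Set.Ici 0), d s < 0 :=
        hcw.eventually_lt continuousWithinAt_const h
      have hmono : nhdsWithin t0 (Set.Ioi t0) ≤ nhdsWithin t0 (Set.Ici 0) :=
        nhdsWithin_mono t0 (fun s hs => le_trans ht00 (le_of_lt hs))
      have hev2 : ∀ᶠ s in nhdsWithin t0 (Set.Ioi t0), d s < 0 := hmono hev
      have hIoc : Set.Ioc t0 t1 ∈ nhdsWithin t0 (Set.Ioi t0) :=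
        Ioc_mem_nhdsGT_of_mem ⟨le_refl t0, ht0lt⟩
      obtain ⟨s, hs1, hs2⟩ := (hev2.and (Filter.eventually_of_mem hIoc (fun s hs => hs))).exists
      exact absurd (hpos s hs2.1 hs2.2) (not_lt.mpr hs1.le)
    · exact h
  have hxxstar : xstar t0 = x t0 := by
    have : x t0 - xstar t0 = 0 := hdt0
    linarith
  -- local Lipschitz constant around x t0
  obtain ⟨K, U, hU, hK⟩ := hfstar (x t0)
  obtain ⟨ε, hε, hball⟩ := Metric.mem_nhds_iff.mp hU
  -- find δ so that x s, xstar s ∈ ball (x t0) ε for s ∈ [0,∞) near t0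
  have hcx : Filter.Tendsto x (nhdsWithin t0 (Set.Ici 0)) (nhds (x t0)) := hx t0 ht00
  have hcxs : Filter.Tendsto xstar (nhdsWithin t0 (Set.Ici 0)) (nhds (x t0)) := by
    have := hxstar t0 ht00
    rwa [ContinuousWithinAt, hxxstar] at this
  have hevx : ∀ᶠ s in nhdsWithin t0 (Set.Ici 0), x s ∈ Metric.ball (x t0) ε :=
    hcx (Metric.ball_mem_nhds _ hε)
  have hevxs : ∀ᶠ s in nhdsWithin t0 (Set.Ici 0), xstar s ∈ Metric.ball (x t0) ε :=
    hcxs (Metric.ball_mem_nhds _ hε)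
  obtain ⟨δ, hδpos, hδ⟩ := Metric.mem_nhdsWithin_iff.mp (hevx.and hevxs)
  -- choose t2
  set t2 : ℝ := min (t0 + δ/2) t1 with ht2_def
  have ht0t2 : t0 < t2 := lt_min (by linarith) ht0lt
  have ht2t1 : t2 ≤ t1 := min_le_right _ _
  have ht20 : (0:ℝ) ≤ t2 := le_trans ht00 ht0t2.le
  have hmemU : ∀ s ∈ Set.Icc t0 t2, x s ∈ U ∧ xstar s ∈ U := by
    intro s hs
    have hs0 : (0:ℝ) ≤ s := le_trans ht00 hs.1
    have hdist : dist s t0 < δ := by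
      rw [Real.dist_eq, abs_of_nonneg (by linarith [hs.1])]
      have : s ≤ t0 + δ/2 := le_trans hs.2 (min_le_left _ _)
      linarith
    have := hδ ⟨Metric.mem_ball.mpr hdist, hs0⟩
    exact ⟨hball this.1, hball this.2⟩
  -- subsets of Ici 0
  have hsub : ∀ c e : ℝ, 0 ≤ c → 0 ≤ e → Set.uIcc c e ⊆ Set.Ici 0 := by
    intro c e hc he s hs
    rcases le_total c e with h | h
    · rw [Set.uIcc_of_le h] at hs; exact le_trans hc hs.1
    · rw [Set.uIcc_of_ge h] at hs; exact le_trans he hs.1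
  -- interval integrability of φ and d on subintervals of [0,∞)
  have hφint : ∀ c e : ℝ, 0 ≤ c → 0 ≤ e → IntervalIntegrable φ volume c e := by
    intro c e hc he
    exact (hφ.mono (hsub c e hc he)).intervalIntegrable
  have hdint : ∀ c e : ℝ, 0 ≤ c → 0 ≤ e → IntervalIntegrable d volume c e := by
    intro c e hc he
    exact (hd_cont.mono (hsub c e hc he)).intervalIntegrable
  -- d t = ∫_{t0}^t φ for t ∈ [t0, t2]
  have hdeq : ∀ t ∈ Set.Icc t0 t2, d t = ∫ s in t0..t, φ s := by
    intro t ht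
    have ht0' : (0:ℝ) ≤ t := le_trans ht00 ht.1
    have e1 : d t = (x 0 - xstar 0) + ∫ s in (0:ℝ)..t, φ s := heq t ht0'
    have e2 : d t0 = (x 0 - xstar 0) + ∫ s in (0:ℝ)..t0, φ s := heq t0 ht00
    have e3 : ((∫ s in (0:ℝ)..t, φ s) - ∫ s in (0:ℝ)..t0, φ s) = ∫ s in t0..t, φ s :=
      integral_interval_sub_left (hφint 0 t le_rfl ht0') (hφint 0 t0 le_rfl ht00)
    have : d t - d t0 = ∫ s in t0..t, φ s := by rw [e1, e2]; linarith [e3]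
    rw [hdt0] at this; linarith
  -- d ≥ 0 on [t0, t2]
  have hdnonneg : ∀ t ∈ Set.Icc t0 t2, 0 ≤ d t := by
    intro t ht
    rcases lt_or_eq_of_le ht.1 with h | h
    · exact (hpos t h (le_trans ht.2 ht2t1)).le
    · rw [← h, hdt0]
  -- key pointwise bound : φ s ≤ K * d s on [t0,t2]
  have hkey : ∀ s ∈ Set.Icc t0 t2, φ s ≤ (K : ℝ) * d s := by
    intro s hs
    have hs0 : (0:ℝ) ≤ s := le_trans ht00 hs.1
    have h1 : φ s ≤ fstar (x s) - fstar (xstar s) := hbound s hs0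
    have h2 : fstar (x s) - fstar (xstar s) ≤ |fstar (x s) - fstar (xstar s)| := le_abs_self _
    have h3 : dist (fstar (x s)) (fstar (xstar s)) ≤ (K : ℝ) * dist (x s) (xstar s) :=
      hK.dist_le_mul _ (hmemU s hs).1 _ (hmemU s hs).2
    rw [Real.dist_eq, Real.dist_eq] at h3
    have h4 : |x s - xstar s| = d s := abs_of_nonneg (hdnonneg s hs)
    calc φ s ≤ |fstar (x s) - fstar (xstar s)| := le_trans h1 h2
      _ ≤ (K : ℝ) * |x s - xstar s| := h3
      _ = (K : ℝ) * d s := by rw [h4]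
  -- g t = ∫_{t0}^t d
  set g : ℝ → ℝ := fun t => ∫ s in t0..t, d s with hg_def
  have hg_cont : ContinuousOn g (Set.Icc t0 t2) := by
    have hint : IntegrableOn d (Set.uIcc t0 t2) volume := by
      rw [Set.uIcc_of_le ht0t2.le]
      have hss : Set.Icc t0 t2 ⊆ Set.Ici 0 := by
        rw [← Set.uIcc_of_le ht0t2.le]; exact hsub t0 t2 ht00 ht20
      exact (hd_cont.mono hss).integrableOn_Icc
    have := continuousOn_primitive_interval (μ := volume) (a := t0) (b := t2) hint
    rwa [Set.uIcc_of_le ht0t2.le] at this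
  -- derivative of g from the right
  have hg_deriv : ∀ t ∈ Set.Ico t0 t2, HasDerivWithinAt g (d t) (Set.Ici t) t := by
    intro t ht
    have ht0' : (0:ℝ) ≤ t := le_trans ht00 ht.1
    have hint : IntervalIntegrable d volume t0 t := hdint t0 t ht00 ht0'
    have hmeas : StronglyMeasurableAtFilter d (nhdsWithin t (Set.Ioi t)) volume := by
      refine ⟨Set.Ici 0, ?_, hd_cont.aestronglyMeasurable measurableSet_Ici⟩
      exact nhdsWithin_mono t (fun s hs => le_trans ht0' (le_of_lt hs))
        self_mem_nhdsWithin
    have hcont : ContinuousWithinAt d (Set.Ioi t) t :=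
      (hd_cont t ht0').mono (fun s hs => le_trans ht0' (le_of_lt hs))
    exact integral_hasDerivWithinAt_right hint hmeas hcont
  -- g ≥ 0 and d t ≤ K * g t on [t0,t2]
  have hg_nonneg : ∀ t ∈ Set.Icc t0 t2, 0 ≤ g t := by
    intro t ht
    exact intervalIntegral.integral_nonneg ht.1
      (fun s hs => hdnonneg s ⟨hs.1, le_trans hs.2 ht.2⟩)
  have hdg : ∀ t ∈ Set.Icc t0 t2, d t ≤ (K : ℝ) * g t := by
    intro t ht
    have ht0' : (0:ℝ) ≤ t := le_trans ht00 ht.1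
    have h1 : (∫ s in t0..t, φ s) ≤ ∫ s in t0..t, (K : ℝ) * d s := by
      apply intervalIntegral.integral_mono_on ht.1 (hφint t0 t ht00 ht0')
        ((hdint t0 t ht00 ht0').const_mul _)
      intro s hs
      exact hkey s ⟨hs.1, le_trans hs.2 ht.2⟩
    rw [intervalIntegral.integral_const_mul] at h1
    rw [hdeq t ht]
    exact h1
  -- Grönwall: g ≡ 0 on [t0, t2]
  have hgron : ∀ t ∈ Set.Icc t0 t2, ‖g t‖ ≤ gronwallBound 0 (K : ℝ) 0 (t - t0) := by
    apply norm_le_gronwallBound_of_norm_deriv_right_le hg_cont hg_deriv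
    · simp [hg_def]
    · intro t ht
      have htIcc : t ∈ Set.Icc t0 t2 := ⟨ht.1, ht.2.le⟩
      have h1 : ‖d t‖ = d t := Real.norm_of_nonneg (hdnonneg t htIcc)
      have h2 : ‖g t‖ = g t := Real.norm_of_nonneg (hg_nonneg t htIcc)
      rw [h1, h2, add_zero]
      exact hdg t htIcc
  have hg0 : g t2 = 0 := by
    have h := hgron t2 ⟨ht0t2.le, le_rfl⟩
    rw [gronwallBound_ε0_δ0, Real.norm_eq_abs] at h
    have h1 : g t2 ≤ 0 := le_trans (le_abs_self _) h
    exact le_antisymm h1 (hg_nonneg t2 ⟨ht0t2.le, le_rfl⟩)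
  have hd2 : d t2 ≤ 0 := by
    have := hdg t2 ⟨ht0t2.le, le_rfl⟩
    rw [hg0, mul_zero] at this
    exact this
  exact absurd (hpos t2 ht0t2 ht2t1) (not_lt.mpr hd2)

theorem comparison_lemma
    (fstar : ℝ → ℝ) (hfstar : LocallyLipschitz fstar)
    (ω a f x xstar : ℝ → ℝ)
    (hω : ContinuousOn ω (Set.Ici 0)) (ha : ContinuousOn a (Set.Ici 0))
    (hf : ContinuousOn f (Set.Ici 0)) (hx : ContinuousOn x (Set.Ici 0))
    (hxstar : ContinuousOn xstar (Set.Ici 0))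
    (hxeq : ∀ t : ℝ, 0 ≤ t → x t = x 0 + 2 * ω t + ∫ s in (0:ℝ)..t, f s)
    (hxstareq : ∀ t : ℝ, 0 ≤ t →
      xstar t = xstar 0 + 2 * ω t + ∫ s in (0:ℝ)..t, (a s + fstar (xstar s))) :
    ((x 0 ≤ xstar 0 ∧ ∀ t : ℝ, 0 ≤ t → f t ≤ a t + fstar (x t)) →
       ∀ t : ℝ, 0 ≤ t → x t ≤ xstar t)
    ∧ ((xstar 0 ≤ x 0 ∧ ∀ t : ℝ, 0 ≤ t → a t + fstar (x t) ≤ f t) →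
       ∀ t : ℝ, 0 ≤ t → xstar t ≤ x t) := by
  have hfc : Continuous fstar := hfstar.continuous
  have hsub : ∀ t : ℝ, 0 ≤ t → Set.uIcc (0:ℝ) t ⊆ Set.Ici 0 := by
    intro t ht
    rw [Set.uIcc_of_le ht]; exact Set.Icc_subset_Ici_self
  have hfint : ∀ t : ℝ, 0 ≤ t → IntervalIntegrable f volume 0 t :=
    fun t ht => (hf.mono (hsub t ht)).intervalIntegrable
  have hgc : ContinuousOn (fun s => a s + fstar (xstar s)) (Set.Ici 0) :=
    ha.add (hfc.comp_continuousOn hxstar)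
  have hgint : ∀ t : ℝ, 0 ≤ t →
      IntervalIntegrable (fun s => a s + fstar (xstar s)) volume 0 t :=
    fun t ht => (hgc.mono (hsub t ht)).intervalIntegrable
  constructor
  · rintro ⟨h0, hle⟩
    apply comparison_aux fstar hfstar x xstar
      (fun s => f s - (a s + fstar (xstar s))) hx hxstar (hf.sub hgc) ?_ ?_ h0
    · intro t ht
      rw [hxeq t ht, hxstareq t ht,
        intervalIntegral.integral_sub (hfint t ht) (hgint t ht)]
      ring
    · intro t ht
      have := hle t ht
      linarith
  · rintro ⟨h0, hle⟩
    apply comparison_aux fstar hfstar xstar x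
      (fun s => (a s + fstar (xstar s)) - f s) hxstar hx (hgc.sub hf) ?_ ?_ h0
    · intro t ht
      rw [hxeq t ht, hxstareq t ht,
        intervalIntegral.integral_sub (hgint t ht) (hfint t ht)]
      ring
    · intro t ht
      have := hle t ht
      linarith
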